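/- arXiv:1404.6411 — 2 statements merged into one kernel-verified Lean document; each statement's English description precedes it below -/
import Mathlib

section
/- Let F be a distribution on [0,∞) and A a distribution on [0,∞) with 1-A(u) ~ a·(1-F(u)) as u → ∞ for some constant a > 0. If F is subexponential, then A is subexponential. -/
open MeasureTheory Filter Set Topology
open scoped ENNReal NNReal

set_option maxHeartbeats 1000000

/-- `n`-fold convolution of a measure on `ℝ` (with `μ^{*0} = δ₀`). -/
noncomputable def convPow (μ : Measure ℝ) : ℕ → Measure ℝ
  | 0 => Measure.dirac 0
  | n + 1 => Measure.conv (convPow μ n) μ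

/-- A distribution `μ` on `[0,∞)` is subexponential if
`(1 - F^{*n}(u))/(1 - F(u)) → n` for every `n ≥ 1`. -/
def Subexponential (μ : Measure ℝ) : Prop :=
  ∀ n : ℕ, 1 ≤ n →
    Tendsto (fun u : ℝ =>
        ((convPow μ n) (Set.Ioi u)).toReal / (μ (Set.Ioi u)).toReal)
      atTop (nhds (n : ℝ))


lemma tail_ne_top (μ : Measure ℝ) [IsFiniteMeasure μ] (u : ℝ) : μ (Set.Ioi u) ≠ ⊤ :=
  (measure_lt_top μ _).ne


lemma tail_meas (σ : Measure ℝ) (u : ℝ) : Measurable (fun x : ℝ => σ (Ioi (u - x))) := by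
  apply Monotone.measurable
  intro x y hxy
  exact measure_mono (Ioi_subset_Ioi (by linarith))

lemma tailR_anti (μ : Measure ℝ) [IsFiniteMeasure μ] {u v : ℝ} (h : u ≤ v) :
    (μ (Ioi v)).toReal ≤ (μ (Ioi u)).toReal :=
  ENNReal.toReal_mono (tail_ne_top μ u) (measure_mono (Ioi_subset_Ioi h))

lemma tailR_le_one (μ : Measure ℝ) [IsProbabilityMeasure μ] (u : ℝ) :
    (μ (Ioi u)).toReal ≤ 1 := by
  rw [show (1:ℝ) = (1:ℝ≥0∞).toReal by simp]
  exact ENNReal.toReal_mono (by simp) (prob_le_one)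

lemma tendsto_tail_zero (μ : Measure ℝ) [IsProbabilityMeasure μ] :
    Tendsto (fun u : ℝ => (μ (Ioi u)).toReal) atTop (nhds 0) := by
  have h : Tendsto (fun u : ℝ => μ (Ioi u)) atTop (nhds 0) := by
    have h2 : (⋂ u : ℝ, Ioi u) = ∅ := by
      ext x; simp only [mem_iInter, mem_Ioi, mem_empty_iff_false, iff_false, not_forall, not_lt]
      exact ⟨x, le_refl x⟩
    have := tendsto_measure_iInter_atTop (μ := μ) (s := fun u : ℝ => Ioi u)
      (fun u => measurableSet_Ioi.nullMeasurableSet)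
      (fun _ _ huv => Ioi_subset_Ioi huv)
      ⟨0, measure_ne_top μ _⟩
    rw [h2, measure_empty] at this; exact this
  exact (ENNReal.tendsto_toReal (by simp)).comp h

lemma prob_tail_neg (μ : Measure ℝ) [IsProbabilityMeasure μ] (hsupp : μ (Iio 0) = 0)
    {v : ℝ} (hv : v < 0) : μ (Ioi v) = 1 := by
  have h1 : μ (Iic v) = 0 := measure_mono_null (fun x hx => lt_of_le_of_lt hx hv) hsupp
  have := prob_compl_eq_one_sub (μ := μ) (measurableSet_Iic (a := v))
  rw [compl_Iic] at this
  rw [this, h1, tsub_zero]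

lemma conv_Ioi (ρ σ : Measure ℝ) [SFinite ρ] [SFinite σ] (u : ℝ) :
    (ρ.conv σ) (Ioi u) = ∫⁻ x, σ (Ioi (u - x)) ∂ρ := by
  rw [Measure.conv, Measure.map_apply (by fun_prop) measurableSet_Ioi,
    Measure.prod_apply ((by fun_prop : Measurable fun p : ℝ × ℝ => p.1 + p.2) measurableSet_Ioi)]
  apply lintegral_congr
  intro x
  congr 1
  ext y
  simp [sub_lt_iff_lt_add']


lemma conv_Iio_zero (ρ σ : Measure ℝ) [SFinite ρ] [SFinite σ]
    (hρ : ρ (Iio 0) = 0) (hσ : σ (Iio 0) = 0) : (ρ.conv σ) (Iio 0) = 0 := by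
  rw [Measure.conv, Measure.map_apply (by fun_prop) measurableSet_Iio,
    Measure.prod_apply ((by fun_prop : Measurable fun p : ℝ × ℝ => p.1 + p.2) measurableSet_Iio)]
  have : ∀ᵐ x ∂ρ, σ (Prod.mk x ⁻¹' ((fun p : ℝ × ℝ => p.1 + p.2) ⁻¹' Iio 0)) = 0 := by
    have hae : ∀ᵐ x ∂ρ, 0 ≤ x := by
      rw [ae_iff]; simp only [not_le]; exact hρ
    filter_upwards [hae] with x hx
    apply measure_mono_null _ hσ
    intro y hy
    simp only [mem_preimage, mem_Iio] at hy ⊢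
    linarith
  rw [lintegral_congr_ae this, lintegral_zero]

instance convPow_prob (μ : Measure ℝ) [IsProbabilityMeasure μ] (n : ℕ) :
    IsProbabilityMeasure (convPow μ n) := by
  induction n with
  | zero => rw [convPow]; infer_instance
  | succ n ih => rw [convPow]; infer_instance

lemma convPow_one (μ : Measure ℝ) [SFinite μ] : convPow μ 1 = μ := by
  rw [convPow, convPow]
  exact Measure.dirac_zero_conv μ

lemma convPow_two (F : Measure ℝ) [SFinite F] : convPow F 2 = F.conv F := by
  rw [convPow, convPow_one]

lemma convPow_Iio_zero (μ : Measure ℝ) [IsProbabilityMeasure μ] (hμ : μ (Iio 0) = 0) (n : ℕ) :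
    (convPow μ n) (Iio 0) = 0 := by
  induction n with
  | zero => rw [convPow]; simp
  | succ n ih => rw [convPow]; exact conv_Iio_zero _ _ ih hμ


lemma lintegral_split3 (ρ : Measure ℝ) (g : ℝ → ℝ≥0∞) (t s : ℝ) (hts : t ≤ s) :
    ∫⁻ x, g x ∂ρ = (∫⁻ x in Iic t, g x ∂ρ) + (∫⁻ x in Ioc t s, g x ∂ρ)
      + ∫⁻ x in Ioi s, g x ∂ρ := by
  have h1 : (∫⁻ x in Iic t, g x ∂ρ) + (∫⁻ x in Ioi t, g x ∂ρ) = ∫⁻ x, g x ∂ρ := by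
    have := lintegral_add_compl g (measurableSet_Iic (a := t)) (μ := ρ)
    rwa [compl_Iic] at this
  have h2 : (∫⁻ x in Ioi t, g x ∂ρ) = (∫⁻ x in Ioc t s, g x ∂ρ) + ∫⁻ x in Ioi s, g x ∂ρ := by
    rw [← Ioc_union_Ioi_eq_Ioi hts, lintegral_union measurableSet_Ioi]
    exact Ioc_disjoint_Ioi le_rfl
  rw [← h1, h2, add_assoc]

lemma fubini_bound (ρ F : Measure ℝ) [IsProbabilityMeasure ρ] [IsProbabilityMeasure F]
    (K : ℝ≥0∞) (hKt : K ≠ ⊤) (t u : ℝ) (hts : t ≤ u - t)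
    (hK : ∀ z : ℝ, t ≤ z → ρ (Ioi z) ≤ K * F (Ioi z)) :
    (∫⁻ x in Ioc t (u - t), F (Ioi (u - x)) ∂ρ)
      ≤ K * ((∫⁻ x in Ioc t (u - t), F (Ioi (u - x)) ∂F) + F (Ioi t) * F (Ioi (u - t))) := by
  set s : Set ℝ := Ioc t (u - t) with hs
  have hmeas_s : MeasurableSet s := measurableSet_Ioc
  -- rewrite LHS as double integral and swap
  have hswap : (∫⁻ x in s, F (Ioi (u - x)) ∂ρ)
      = ∫⁻ z, ρ (Ioi (u - z) ∩ s) ∂F := by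
    have h1 : ∀ x : ℝ, F (Ioi (u - x)) = ∫⁻ z, (Ioi (u - x)).indicator 1 z ∂F := by
      intro x; rw [lintegral_indicator_one measurableSet_Ioi]
    calc (∫⁻ x in s, F (Ioi (u - x)) ∂ρ)
        = ∫⁻ x in s, ∫⁻ z, (Ioi (u - x)).indicator 1 z ∂F ∂ρ := by
          apply lintegral_congr; intro x; rw [h1]
      _ = ∫⁻ z, ∫⁻ x in s, (Ioi (u - x)).indicator 1 z ∂ρ ∂F := by
          apply lintegral_lintegral_swap
          have hSmeas : MeasurableSet {p : ℝ × ℝ | u - p.1 < p.2} := by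
            apply measurableSet_lt <;> fun_prop
          have : (Function.uncurry fun x z => (Ioi (u - x)).indicator 1 z)
              = {p : ℝ × ℝ | u - p.1 < p.2}.indicator (fun _ => (1 : ℝ≥0∞)) := by
            funext p
            rcases p with ⟨x, z⟩
            simp only [Function.uncurry, indicator, mem_Ioi, mem_setOf_eq, Pi.one_apply]
          rw [this]
          exact ((measurable_const (a := (1:ℝ≥0∞))).indicator hSmeas).aemeasurable
      _ = ∫⁻ z, ρ (Ioi (u - z) ∩ s) ∂F := by
          apply lintegral_congr; intro z
          have : ∀ x : ℝ, (Ioi (u - x)).indicator (1 : ℝ → ℝ≥0∞) z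
              = (Ioi (u - z)).indicator (1 : ℝ → ℝ≥0∞) x := by
            intro x
            simp only [indicator, mem_Ioi, Pi.one_apply]
            by_cases h : u - x < z
            · rw [if_pos h, if_pos (by linarith)]
            · rw [if_neg h, if_neg (by intro h2; exact h (by linarith))]
          calc (∫⁻ x in s, (Ioi (u - x)).indicator 1 z ∂ρ)
              = ∫⁻ x in s, (Ioi (u - z)).indicator 1 x ∂ρ := by
                apply lintegral_congr; intro x; rw [this]
            _ = ρ (Ioi (u - z) ∩ s) := by
                rw [lintegral_indicator measurableSet_Ioi, Measure.restrict_restrict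
                  measurableSet_Ioi]
                simp
  rw [hswap]
  -- bound the integrand
  have hbound : ∀ z : ℝ, ρ (Ioi (u - z) ∩ s)
      ≤ s.indicator (fun z => K * F (Ioi (u - z))) z
        + (Ioi (u - t)).indicator (fun _ => K * F (Ioi t)) z := by
    intro z
    rcases le_or_gt z t with hz | hz
    · have : Ioi (u - z) ∩ s = ∅ := by
        ext x
        simp only [mem_inter_iff, mem_Ioi, hs, mem_Ioc, mem_empty_iff_false, iff_false, not_and,
          and_imp]
        intro h1 h2 h3
        linarith
      simp [this]
    · rcases le_or_gt z (u - t) with hz2 | hz2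
      · have h1 : ρ (Ioi (u - z) ∩ s) ≤ K * F (Ioi (u - z)) :=
          le_trans (measure_mono inter_subset_left) (hK _ (by linarith))
        have h2 : z ∈ s := ⟨hz, hz2⟩
        calc ρ (Ioi (u - z) ∩ s) ≤ K * F (Ioi (u - z)) := h1
          _ ≤ _ := by
            rw [indicator_of_mem h2]
            exact le_add_right le_rfl
      · have h1 : ρ (Ioi (u - z) ∩ s) ≤ K * F (Ioi t) := by
          refine le_trans (measure_mono ?_) (hK _ le_rfl)
          intro x hx
          exact hx.2.1
        calc ρ (Ioi (u - z) ∩ s) ≤ K * F (Ioi t) := h1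
          _ ≤ _ := by
            rw [indicator_of_mem (mem_Ioi.2 hz2)]
            exact le_add_left le_rfl
  calc (∫⁻ z, ρ (Ioi (u - z) ∩ s) ∂F)
      ≤ ∫⁻ z, (s.indicator (fun z => K * F (Ioi (u - z))) z
          + (Ioi (u - t)).indicator (fun _ => K * F (Ioi t)) z) ∂F :=
        lintegral_mono hbound
    _ = (∫⁻ z in s, K * F (Ioi (u - z)) ∂F) + (∫⁻ z in Ioi (u - t), K * F (Ioi t) ∂F) := by
        rw [lintegral_add_left, lintegral_indicator hmeas_s, lintegral_indicator measurableSet_Ioi]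
        exact ((measurable_const.mul (tail_meas F u)).indicator hmeas_s)
    _ = K * (∫⁻ z in s, F (Ioi (u - z)) ∂F) + K * F (Ioi t) * F (Ioi (u - t)) := by
        rw [lintegral_const_mul' _ _ hKt, setLIntegral_const]
    _ = K * ((∫⁻ x in s, F (Ioi (u - x)) ∂F) + F (Ioi t) * F (Ioi (u - t))) := by
        ring



lemma toReal_Iic (μ : Measure ℝ) [IsProbabilityMeasure μ] (t : ℝ) :
    (μ (Iic t)).toReal = 1 - (μ (Ioi t)).toReal := by
  have h : μ (Iic t) + μ (Ioi t) = 1 := by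
    rw [← measure_union (Iic_disjoint_Ioi le_rfl) measurableSet_Ioi, Iic_union_Ioi,
      measure_univ]
  have h2 := congrArg ENNReal.toReal h
  rw [ENNReal.toReal_add (measure_ne_top μ _) (measure_ne_top μ _)] at h2
  simp at h2
  linarith

lemma toReal_Ioc (μ : Measure ℝ) [IsProbabilityMeasure μ] {a b : ℝ} (hab : a ≤ b) :
    (μ (Ioc a b)).toReal = (μ (Ioi a)).toReal - (μ (Ioi b)).toReal := by
  have h : μ (Ioc a b) + μ (Ioi b) = μ (Ioi a) := by
    rw [← measure_union (Ioc_disjoint_Ioi le_rfl) measurableSet_Ioi,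
      Ioc_union_Ioi_eq_Ioi hab]
  have h2 := congrArg ENNReal.toReal h
  rw [ENNReal.toReal_add (measure_ne_top μ _) (measure_ne_top μ _)] at h2
  linarith

lemma Icc_zero_eq (μ : Measure ℝ) (hsupp : μ (Iio 0) = 0) (t : ℝ) :
    μ (Icc 0 t) = μ (Iic t) := by
  apply le_antisymm (measure_mono Icc_subset_Iic_self)
  calc μ (Iic t) ≤ μ (Icc 0 t ∪ Iio 0) := by
        apply measure_mono
        intro x hx
        rcases le_or_gt 0 x with h | h
        · exact Or.inl ⟨h, hx⟩
        · exact Or.inr h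
    _ ≤ μ (Icc 0 t) + μ (Iio 0) := measure_union_le _ _
    _ = μ (Icc 0 t) := by rw [hsupp, add_zero]

lemma tailR_pos (F : Measure ℝ) [IsProbabilityMeasure F] (hFpos : ∀ u : ℝ, F (Ioi u) ≠ 0)
    (u : ℝ) : 0 < (F (Ioi u)).toReal :=
  ENNReal.toReal_pos (hFpos u) (tail_ne_top F u)

lemma tendsto_shift_tail (μ : Measure ℝ) [IsProbabilityMeasure μ] (t : ℝ) :
    Tendsto (fun u : ℝ => (μ (Ioi (u - t))).toReal) atTop (nhds 0) := by
  have := (tendsto_tail_zero μ).comp (tendsto_atTop_add_const_right atTop (-t) tendsto_id)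
  simpa [Function.comp_def, sub_eq_add_neg] using this

lemma conv_tail_lower (F : Measure ℝ) [IsProbabilityMeasure F] (hFsupp : F (Iio 0) = 0)
    {t u : ℝ} (ht : 0 ≤ t) (htu : t ≤ u) :
    (F (Ioi u)).toReal * (1 - (F (Ioi t)).toReal)
        + (F (Ioi (u - t))).toReal * ((F (Ioi t)).toReal - (F (Ioi u)).toReal)
        + (F (Ioi u)).toReal ≤ ((F.conv F) (Ioi u)).toReal := by
  have hmain : F (Ioi u) * F (Iic t) + F (Ioi (u - t)) * F (Ioc t u) + F (Ioi u)
      ≤ (F.conv F) (Ioi u) := by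
    rw [conv_Ioi, lintegral_split3 F _ t u htu]
    have hI1 : F (Ioi u) * F (Iic t) ≤ ∫⁻ x in Iic t, F (Ioi (u - x)) ∂F := by
      calc F (Ioi u) * F (Iic t) = F (Ioi u) * F (Icc 0 t) := by rw [Icc_zero_eq F hFsupp]
        _ = ∫⁻ _ in Icc 0 t, F (Ioi u) ∂F := by rw [setLIntegral_const, mul_comm]
        _ ≤ ∫⁻ x in Icc 0 t, F (Ioi (u - x)) ∂F := by
            apply setLIntegral_mono' measurableSet_Icc
            intro x hx
            exact measure_mono (Ioi_subset_Ioi (by linarith [hx.1]))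
        _ ≤ ∫⁻ x in Iic t, F (Ioi (u - x)) ∂F :=
            lintegral_mono_set Icc_subset_Iic_self
    have hI2 : F (Ioi (u - t)) * F (Ioc t u) ≤ ∫⁻ x in Ioc t u, F (Ioi (u - x)) ∂F := by
      calc F (Ioi (u - t)) * F (Ioc t u) = ∫⁻ _ in Ioc t u, F (Ioi (u - t)) ∂F := by
            rw [setLIntegral_const, mul_comm]
        _ ≤ ∫⁻ x in Ioc t u, F (Ioi (u - x)) ∂F := by
            apply setLIntegral_mono' measurableSet_Ioc
            intro x hx
            exact measure_mono (Ioi_subset_Ioi (by linarith [hx.1]))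
    have hI3 : F (Ioi u) ≤ ∫⁻ x in Ioi u, F (Ioi (u - x)) ∂F := by
      calc F (Ioi u) = ∫⁻ _ in Ioi u, 1 ∂F := by rw [setLIntegral_const, one_mul]
        _ ≤ ∫⁻ x in Ioi u, F (Ioi (u - x)) ∂F := by
            apply setLIntegral_mono' measurableSet_Ioi
            intro x hx
            rw [prob_tail_neg F hFsupp (by simp only [mem_Ioi] at hx; linarith)]
    exact add_le_add (add_le_add hI1 hI2) hI3
  have := ENNReal.toReal_mono (measure_ne_top _ _) hmain
  rw [ENNReal.toReal_add (by finiteness) (measure_ne_top _ _),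
    ENNReal.toReal_add (by finiteness) (by finiteness), ENNReal.toReal_mul,
    ENNReal.toReal_mul, toReal_Iic, toReal_Ioc F htu] at this
  linarith

lemma longtail (F : Measure ℝ) [IsProbabilityMeasure F] (hFsupp : F (Iio 0) = 0)
    (hFpos : ∀ u : ℝ, F (Ioi u) ≠ 0)
    (hF2 : Tendsto (fun u => ((F.conv F) (Ioi u)).toReal / (F (Ioi u)).toReal) atTop (nhds 2))
    (t : ℝ) (ht : 0 ≤ t) :
    Tendsto (fun u => (F (Ioi (u - t))).toReal / (F (Ioi u)).toReal) atTop (nhds 1) := by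
  have hft : 0 < (F (Ioi t)).toReal := tailR_pos F hFpos t
  have hb : Tendsto (fun u => 1 + ((((F.conv F) (Ioi u)).toReal / (F (Ioi u)).toReal - 2)
      + (F (Ioi (u - t))).toReal) / (F (Ioi t)).toReal) atTop (nhds 1) := by
    have h1 : Tendsto (fun u => ((F.conv F) (Ioi u)).toReal / (F (Ioi u)).toReal - 2)
        atTop (nhds 0) := by simpa using hF2.sub_const 2
    have h2 := tendsto_shift_tail F t
    have h3 := (h1.add h2).div_const (F (Ioi t)).toReal
    have h4 := (tendsto_const_nhds : Tendsto (fun _ : ℝ => (1:ℝ)) atTop (nhds 1)).add h3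
    simpa using h4
  refine tendsto_of_tendsto_of_tendsto_of_le_of_le' tendsto_const_nhds hb ?_ ?_
  · filter_upwards with u
    exact (one_le_div (tailR_pos F hFpos u)).2 (tailR_anti F (by linarith))
  · filter_upwards [eventually_ge_atTop t] with u htu
    have hineq := conv_tail_lower F hFsupp ht htu
    have hfu : 0 < (F (Ioi u)).toReal := tailR_pos F hFpos u
    set fu := (F (Ioi u)).toReal
    set fut := (F (Ioi (u - t))).toReal
    set ft := (F (Ioi t)).toReal
    set T := ((F.conv F) (Ioi u)).toReal
    have expand : (fut / fu - 1) * ft * fu = fut * ft - ft * fu := by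
      field_simp
    have expand2 : ((T / fu - 2) + fut) * fu = T - 2 * fu + fut * fu := by
      field_simp
    have hkey2 : (fut / fu - 1) * ft * fu ≤ ((T / fu - 2) + fut) * fu := by
      rw [expand, expand2]; nlinarith [hineq]
    have hkey3 : (fut / fu - 1) * ft ≤ (T / fu - 2) + fut :=
      le_of_mul_le_mul_right hkey2 hfu
    have hkey4 : fut / fu - 1 ≤ ((T / fu - 2) + fut) / ft :=
      (le_div_iff₀ hft).2 hkey3
    linarith

lemma setLint_le_one (μ σ : Measure ℝ) [IsProbabilityMeasure μ] [IsProbabilityMeasure σ]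
    (s : Set ℝ) (u : ℝ) : (∫⁻ x in s, σ (Ioi (u - x)) ∂μ) ≤ 1 := by
  calc (∫⁻ x in s, σ (Ioi (u - x)) ∂μ) ≤ ∫⁻ _ in s, 1 ∂μ :=
        lintegral_mono (fun x => prob_le_one)
    _ = μ s := by rw [setLIntegral_const, one_mul]
    _ ≤ 1 := prob_le_one

lemma lower_I1 (σ ρ : Measure ℝ) [IsProbabilityMeasure σ] [IsProbabilityMeasure ρ]
    (hρsupp : ρ (Iio 0) = 0) (u t : ℝ) :
    σ (Ioi u) * ρ (Iic t) ≤ ∫⁻ x in Iic t, σ (Ioi (u - x)) ∂ρ := by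
  calc σ (Ioi u) * ρ (Iic t) = σ (Ioi u) * ρ (Icc 0 t) := by rw [Icc_zero_eq ρ hρsupp]
    _ = ∫⁻ _ in Icc 0 t, σ (Ioi u) ∂ρ := by rw [setLIntegral_const, mul_comm]
    _ ≤ ∫⁻ x in Icc 0 t, σ (Ioi (u - x)) ∂ρ := by
        apply setLIntegral_mono' measurableSet_Icc
        intro x hx
        exact measure_mono (Ioi_subset_Ioi (by linarith [hx.1]))
    _ ≤ ∫⁻ x in Iic t, σ (Ioi (u - x)) ∂ρ := lintegral_mono_set Icc_subset_Iic_self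

lemma lower_I3 (σ ρ : Measure ℝ) [IsProbabilityMeasure σ] [IsProbabilityMeasure ρ]
    (hσsupp : σ (Iio 0) = 0) {u t : ℝ} (ht : 0 ≤ t) (htu : t ≤ u) :
    σ (Ioi t) * ρ (Ioc (u - t) u) + ρ (Ioi u) ≤ ∫⁻ x in Ioi (u - t), σ (Ioi (u - x)) ∂ρ := by
  have hsplit : (∫⁻ x in Ioi (u - t), σ (Ioi (u - x)) ∂ρ)
      = (∫⁻ x in Ioc (u - t) u, σ (Ioi (u - x)) ∂ρ) + ∫⁻ x in Ioi u, σ (Ioi (u - x)) ∂ρ := by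
    rw [← lintegral_union measurableSet_Ioi (Ioc_disjoint_Ioi le_rfl),
      Ioc_union_Ioi_eq_Ioi (by linarith)]
  rw [hsplit]
  apply add_le_add
  · calc σ (Ioi t) * ρ (Ioc (u - t) u)
        = ∫⁻ _ in Ioc (u - t) u, σ (Ioi t) ∂ρ := by rw [setLIntegral_const, mul_comm]
      _ ≤ ∫⁻ x in Ioc (u - t) u, σ (Ioi (u - x)) ∂ρ := by
          apply setLIntegral_mono' measurableSet_Ioc
          intro x hx
          exact measure_mono (Ioi_subset_Ioi (by linarith [hx.1]))
  · calc ρ (Ioi u)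
        = ∫⁻ _ in Ioi u, 1 ∂ρ := by rw [setLIntegral_const, one_mul]
      _ ≤ ∫⁻ x in Ioi u, σ (Ioi (u - x)) ∂ρ := by
          apply setLIntegral_mono' measurableSet_Ioi
          intro x hx
          rw [prob_tail_neg σ hσsupp (by simp only [mem_Ioi] at hx; linarith)]
open scoped ENNReal NNReal
set_option maxHeartbeats 1000000

lemma key_conv_tail (F ρ σ : Measure ℝ) [IsProbabilityMeasure F] [IsProbabilityMeasure ρ]
    [IsProbabilityMeasure σ]
    (hFsupp : F (Iio 0) = 0) (hρsupp : ρ (Iio 0) = 0) (hσsupp : σ (Iio 0) = 0)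
    (hFpos : ∀ u : ℝ, F (Ioi u) ≠ 0)
    (hF2 : Tendsto (fun u => ((F.conv F) (Ioi u)).toReal / (F (Ioi u)).toReal) atTop (nhds 2))
    (c1 c2 : ℝ) (hc1n : 0 ≤ c1) (hc2n : 0 ≤ c2)
    (h1 : Tendsto (fun u => (ρ (Ioi u)).toReal / (F (Ioi u)).toReal) atTop (nhds c1))
    (h2 : Tendsto (fun u => (σ (Ioi u)).toReal / (F (Ioi u)).toReal) atTop (nhds c2)) :
    Tendsto (fun u => ((ρ.conv σ) (Ioi u)).toReal / (F (Ioi u)).toReal) atTop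
      (nhds (c1 + c2)) := by
  have hfpos : ∀ u : ℝ, 0 < (F (Ioi u)).toReal := tailR_pos F hFpos
  set K1 : ℝ := c1 + 1 with hK1def
  set K2 : ℝ := c2 + 1 with hK2def
  have hK1 : 0 < K1 := by linarith
  have hK2 : 0 < K2 := by linarith
  rw [Metric.tendsto_nhds]
  intro ε hε
  set D : ℝ := c1 + c2 + 8 + 4 * (K1 * K2) + c2 with hDdef
  have hD : 0 < D := by nlinarith
  set δ : ℝ := min 1 (ε / (2 * D)) with hδdef
  have hδ : 0 < δ := lt_min one_pos (by positivity)
  have hδ1 : δ ≤ 1 := min_le_left _ _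
  have hδε : δ * D ≤ ε / 2 := by
    have := min_le_right 1 (ε / (2 * D))
    calc δ * D ≤ (ε / (2 * D)) * D := mul_le_mul_of_nonneg_right this hD.le
      _ = ε / 2 := by field_simp
  -- choose t
  obtain ⟨t1, ht1⟩ := eventually_atTop.1 (h1.eventually_lt_const (lt_add_one c1))
  obtain ⟨t2, ht2⟩ := eventually_atTop.1 (h2.eventually_lt_const (lt_add_one c2))
  have hev : ∀ᶠ t : ℝ in atTop, (0 ≤ t ∧ t1 ≤ t ∧ t2 ≤ t) ∧
      (F (Ioi t)).toReal < δ ∧ (ρ (Ioi t)).toReal < δ := by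
    filter_upwards [eventually_ge_atTop (0:ℝ), eventually_ge_atTop t1, eventually_ge_atTop t2,
      (tendsto_tail_zero F).eventually_lt_const hδ,
      (tendsto_tail_zero ρ).eventually_lt_const hδ] with t h0 ha hb hc hd
    exact ⟨⟨h0, ha, hb⟩, hc, hd⟩
  obtain ⟨t, ⟨⟨ht0, htt1, htt2⟩, htf, htp⟩⟩ := hev.exists
  have hft : 0 < (F (Ioi t)).toReal := hfpos t
  -- ennreal domination
  have hK1e : ∀ z : ℝ, t ≤ z → ρ (Ioi z) ≤ ENNReal.ofReal K1 * F (Ioi z) := by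
    intro z hz
    have hlt := le_of_lt (ht1 z (le_trans htt1 hz))
    have hle : (ρ (Ioi z)).toReal ≤ K1 * (F (Ioi z)).toReal := by
      rw [div_le_iff₀ (hfpos z)] at hlt; exact hlt
    calc ρ (Ioi z) = ENNReal.ofReal ((ρ (Ioi z)).toReal) :=
          (ENNReal.ofReal_toReal (measure_ne_top _ _)).symm
      _ ≤ ENNReal.ofReal (K1 * (F (Ioi z)).toReal) := ENNReal.ofReal_le_ofReal hle
      _ = ENNReal.ofReal K1 * F (Ioi z) := by
          rw [ENNReal.ofReal_mul hK1.le, ENNReal.ofReal_toReal (measure_ne_top _ _)]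
  have hK2e : ∀ z : ℝ, t ≤ z → σ (Ioi z) ≤ ENNReal.ofReal K2 * F (Ioi z) := by
    intro z hz
    have hlt := le_of_lt (ht2 z (le_trans htt2 hz))
    have hle : (σ (Ioi z)).toReal ≤ K2 * (F (Ioi z)).toReal := by
      rw [div_le_iff₀ (hfpos z)] at hlt; exact hlt
    calc σ (Ioi z) = ENNReal.ofReal ((σ (Ioi z)).toReal) :=
          (ENNReal.ofReal_toReal (measure_ne_top _ _)).symm
      _ ≤ ENNReal.ofReal (K2 * (F (Ioi z)).toReal) := ENNReal.ofReal_le_ofReal hle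
      _ = ENNReal.ofReal K2 * F (Ioi z) := by
          rw [ENNReal.ofReal_mul hK2.le, ENNReal.ofReal_toReal (measure_ne_top _ _)]
  -- shifted limits
  have hshift : Tendsto (fun u : ℝ => u - t) atTop atTop := by
    have := tendsto_atTop_add_const_right atTop (-t) (tendsto_id (α := ℝ))
    simpa [sub_eq_add_neg] using this
  have h1s := (h1.comp hshift)
  have h2s := (h2.comp hshift)
  have hlongt := longtail F hFsupp hFpos hF2 t ht0
  -- eventual u facts
  filter_upwards [Metric.tendsto_nhds.1 h1s δ hδ, Metric.tendsto_nhds.1 h2s δ hδ,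
    Metric.tendsto_nhds.1 h1 δ hδ, Metric.tendsto_nhds.1 h2 δ hδ,
    Metric.tendsto_nhds.1 hlongt δ hδ, Metric.tendsto_nhds.1 hF2 δ hδ,
    eventually_ge_atTop (2 * t)] with u hu1 hu2 hu3 hu4 hu5 hu6 hu7
  have htut : t ≤ u - t := by linarith
  have htu : t ≤ u := by linarith
  have hfu : 0 < (F (Ioi u)).toReal := hfpos u
  have hfut : 0 < (F (Ioi (u - t))).toReal := hfpos (u - t)
  -- upper bound (ennreal)
  set MF : ℝ≥0∞ := ∫⁻ x in Ioc t (u - t), F (Ioi (u - x)) ∂F with hMFdef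
  set Mρ : ℝ≥0∞ := ∫⁻ x in Ioc t (u - t), F (Ioi (u - x)) ∂ρ with hMρdef
  have hMF1 : MF ≤ 1 := setLint_le_one F F _ u
  have hup_e : (ρ.conv σ) (Ioi u) ≤ σ (Ioi (u - t))
      + ENNReal.ofReal K2 * (ENNReal.ofReal K1 * (MF + F (Ioi t) * F (Ioi (u - t))))
      + ρ (Ioi (u - t)) := by
    rw [conv_Ioi, lintegral_split3 ρ _ t (u - t) htut]
    have hI1 : (∫⁻ x in Iic t, σ (Ioi (u - x)) ∂ρ) ≤ σ (Ioi (u - t)) := by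
      calc (∫⁻ x in Iic t, σ (Ioi (u - x)) ∂ρ) ≤ ∫⁻ _ in Iic t, σ (Ioi (u - t)) ∂ρ := by
            apply setLIntegral_mono' measurableSet_Iic
            intro x hx
            exact measure_mono (Ioi_subset_Ioi (by simp only [mem_Iic] at hx; linarith))
        _ = σ (Ioi (u - t)) * ρ (Iic t) := setLIntegral_const _ _
        _ ≤ σ (Ioi (u - t)) := mul_le_of_le_one_right zero_le prob_le_one
    have hI2 : (∫⁻ x in Ioc t (u - t), σ (Ioi (u - x)) ∂ρ)
        ≤ ENNReal.ofReal K2 * (ENNReal.ofReal K1 * (MF + F (Ioi t) * F (Ioi (u - t)))) := by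
      calc (∫⁻ x in Ioc t (u - t), σ (Ioi (u - x)) ∂ρ)
          ≤ ∫⁻ x in Ioc t (u - t), ENNReal.ofReal K2 * F (Ioi (u - x)) ∂ρ := by
            apply setLIntegral_mono' measurableSet_Ioc
            intro x hx
            exact hK2e (u - x) (by simp only [mem_Ioc] at hx; linarith [hx.2])
        _ = ENNReal.ofReal K2 * Mρ := by
            rw [hMρdef, lintegral_const_mul' _ _ ENNReal.ofReal_ne_top]
        _ ≤ ENNReal.ofReal K2 * (ENNReal.ofReal K1 * (MF + F (Ioi t) * F (Ioi (u - t)))) := by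
            apply mul_le_mul_right
            exact fubini_bound ρ F (ENNReal.ofReal K1) ENNReal.ofReal_ne_top t u htut hK1e
    have hI3 : (∫⁻ x in Ioi (u - t), σ (Ioi (u - x)) ∂ρ) ≤ ρ (Ioi (u - t)) := by
      calc (∫⁻ x in Ioi (u - t), σ (Ioi (u - x)) ∂ρ) ≤ ∫⁻ _ in Ioi (u - t), 1 ∂ρ :=
            lintegral_mono (fun x => prob_le_one)
        _ = ρ (Ioi (u - t)) := by rw [setLIntegral_const, one_mul]
    exact add_le_add (add_le_add hI1 hI2) hI3
  -- convert upper bound to reals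
  have hMF_ne : MF ≠ ⊤ := (lt_of_le_of_lt hMF1 (by simp)).ne
  have hup : ((ρ.conv σ) (Ioi u)).toReal ≤ (σ (Ioi (u - t))).toReal
      + K2 * (K1 * (MF.toReal + (F (Ioi t)).toReal * (F (Ioi (u - t))).toReal))
      + (ρ (Ioi (u - t))).toReal := by
    have hne2 : ENNReal.ofReal K1 * (MF + F (Ioi t) * F (Ioi (u - t))) ≠ ⊤ := by
      apply ENNReal.mul_ne_top ENNReal.ofReal_ne_top
      exact ENNReal.add_ne_top.2 ⟨hMF_ne, ENNReal.mul_ne_top (measure_ne_top _ _)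
        (measure_ne_top _ _)⟩
    have hne1 : ENNReal.ofReal K2 * (ENNReal.ofReal K1
        * (MF + F (Ioi t) * F (Ioi (u - t)))) ≠ ⊤ :=
      ENNReal.mul_ne_top ENNReal.ofReal_ne_top hne2
    have := ENNReal.toReal_mono (by
      exact ENNReal.add_ne_top.2 ⟨ENNReal.add_ne_top.2 ⟨measure_ne_top _ _, hne1⟩,
        measure_ne_top _ _⟩) hup_e
    rw [ENNReal.toReal_add (ENNReal.add_ne_top.2 ⟨measure_ne_top _ _, hne1⟩) (measure_ne_top _ _),
      ENNReal.toReal_add (measure_ne_top _ _) hne1, ENNReal.toReal_mul, ENNReal.toReal_mul,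
      ENNReal.toReal_add hMF_ne (ENNReal.mul_ne_top (measure_ne_top _ _) (measure_ne_top _ _)),
      ENNReal.toReal_mul, ENNReal.toReal_ofReal hK1.le, ENNReal.toReal_ofReal hK2.le] at this
    exact this
  -- bound on MF.toReal : decomposition of F cdot F tail
  have hsplitF : ((F.conv F) (Ioi u)).toReal = (∫⁻ x in Iic t, F (Ioi (u - x)) ∂F).toReal
      + MF.toReal + (∫⁻ x in Ioi (u - t), F (Ioi (u - x)) ∂F).toReal := by
    rw [conv_Ioi, lintegral_split3 F _ t (u - t) htut, hMFdef]
    have n1 : (∫⁻ x in Iic t, F (Ioi (u - x)) ∂F) ≠ ⊤ :=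
      (lt_of_le_of_lt (setLint_le_one F F _ u) (by simp)).ne
    have n3 : (∫⁻ x in Ioi (u - t), F (Ioi (u - x)) ∂F) ≠ ⊤ :=
      (lt_of_le_of_lt (setLint_le_one F F _ u) (by simp)).ne
    rw [ENNReal.toReal_add (ENNReal.add_ne_top.2 ⟨n1, hMF_ne⟩) n3,
      ENNReal.toReal_add n1 hMF_ne]
  have hJ1 : (F (Ioi u)).toReal * (1 - (F (Ioi t)).toReal)
      ≤ (∫⁻ x in Iic t, F (Ioi (u - x)) ∂F).toReal := by
    have := ENNReal.toReal_mono
      ((lt_of_le_of_lt (setLint_le_one F F _ u) (by simp)).ne) (lower_I1 F F hFsupp u t)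
    rwa [ENNReal.toReal_mul, toReal_Iic] at this
  have hJ3 : (F (Ioi t)).toReal * ((F (Ioi (u - t))).toReal - (F (Ioi u)).toReal)
      + (F (Ioi u)).toReal ≤ (∫⁻ x in Ioi (u - t), F (Ioi (u - x)) ∂F).toReal := by
    have := ENNReal.toReal_mono
      ((lt_of_le_of_lt (setLint_le_one F F _ u) (by simp)).ne) (lower_I3 F F hFsupp ht0 htu)
    rwa [ENNReal.toReal_add (ENNReal.mul_ne_top (measure_ne_top _ _) (measure_ne_top _ _))
      (measure_ne_top _ _), ENNReal.toReal_mul, toReal_Ioc F (show u - t ≤ u by linarith)] at this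
  -- lower bound for the conv tail
  have hlow : (σ (Ioi u)).toReal * (1 - (ρ (Ioi t)).toReal) + (ρ (Ioi u)).toReal
      ≤ ((ρ.conv σ) (Ioi u)).toReal := by
    have hlow_e : σ (Ioi u) * ρ (Iic t) + ρ (Ioi u) ≤ (ρ.conv σ) (Ioi u) := by
      rw [conv_Ioi, lintegral_split3 ρ _ t (u - t) htut]
      have g1 := lower_I1 σ ρ hρsupp u t
      have g3 : ρ (Ioi u) ≤ ∫⁻ x in Ioi (u - t), σ (Ioi (u - x)) ∂ρ :=
        le_trans (le_add_self) (lower_I3 σ ρ hσsupp ht0 htu)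
      calc σ (Ioi u) * ρ (Iic t) + ρ (Ioi u)
          ≤ (∫⁻ x in Iic t, σ (Ioi (u - x)) ∂ρ) + ∫⁻ x in Ioi (u - t), σ (Ioi (u - x)) ∂ρ :=
            add_le_add g1 g3
        _ ≤ _ := by
            apply add_le_add_left
            exact le_add_right le_rfl
    have := ENNReal.toReal_mono (measure_ne_top _ _) hlow_e
    rwa [ENNReal.toReal_add (ENNReal.mul_ne_top (measure_ne_top _ _) (measure_ne_top _ _))
      (measure_ne_top _ _), ENNReal.toReal_mul, toReal_Iic] at this
  -- now pure real arithmetic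
  set fu := (F (Ioi u)).toReal with hfudef
  set fut := (F (Ioi (u - t))).toReal with hfutdef
  set ft := (F (Ioi t)).toReal with hftdef
  set HR := ((ρ.conv σ) (Ioi u)).toReal / fu with hHRdef
  have eH : ((ρ.conv σ) (Ioi u)).toReal = HR * fu := by
    rw [hHRdef]; field_simp
  have hR1 : 1 ≤ fut / fu := (one_le_div hfu).2 (tailR_anti F (by linarith))
  -- named ratio bounds
  rw [Real.dist_eq, abs_lt] at hu1 hu2 hu3 hu4 hu5 hu6 ⊢
  simp only [Function.comp] at hu1 hu2
  set A1 := (σ (Ioi (u - t))).toReal / fut with hA1def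
  set A2 := (ρ (Ioi (u - t))).toReal / fut with hA2def
  set A3 := (ρ (Ioi u)).toReal / fu with hA3def
  set A4 := (σ (Ioi u)).toReal / fu with hA4def
  set R := fut / fu with hRdef
  set S := ((F.conv F) (Ioi u)).toReal / fu with hSdef
  have eA1 : (σ (Ioi (u - t))).toReal = A1 * fut := by rw [hA1def]; field_simp
  have eA2 : (ρ (Ioi (u - t))).toReal = A2 * fut := by rw [hA2def]; field_simp
  have eA3 : (ρ (Ioi u)).toReal = A3 * fu := by rw [hA3def]; field_simp
  have eA4 : (σ (Ioi u)).toReal = A4 * fu := by rw [hA4def]; field_simp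
  have eR : fut = R * fu := by rw [hRdef]; field_simp
  have eS : ((F.conv F) (Ioi u)).toReal = S * fu := by rw [hSdef]; field_simp
  have hMFr : MF.toReal ≤ (S - 2 + ft) * fu := by
    have h6 : S * fu = (∫⁻ x in Iic t, F (Ioi (u - x)) ∂F).toReal + MF.toReal
        + (∫⁻ x in Ioi (u - t), F (Ioi (u - x)) ∂F).toReal := by rw [← eS, hsplitF]
    have hfufut : fu ≤ fut := tailR_anti F (by linarith)
    have hmul : ft * fu ≤ ft * fut := mul_le_mul_of_nonneg_left hfufut hft.le
    linarith [h6, hJ1, hJ3, hmul]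
  have hA1nn : 0 ≤ A1 := div_nonneg ENNReal.toReal_nonneg hfut.le
  have hA2nn : 0 ≤ A2 := div_nonneg ENNReal.toReal_nonneg hfut.le
  have hA3nn : 0 ≤ A3 := div_nonneg ENNReal.toReal_nonneg hfu.le
  have hA4nn : 0 ≤ A4 := div_nonneg ENNReal.toReal_nonneg hfu.le
  have hftnn : (0:ℝ) ≤ ft := hft.le
  have hptnn : (0:ℝ) ≤ (ρ (Ioi t)).toReal := ENNReal.toReal_nonneg
  have hfutδ : ft < δ := htf
  -- upper bound in divided form
  have hmulbound : K2 * (K1 * (MF.toReal + ft * fut))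
      ≤ K2 * (K1 * ((S - 2 + ft) * fu + ft * fut)) := by
    apply mul_le_mul_of_nonneg_left _ hK2.le
    apply mul_le_mul_of_nonneg_left _ hK1.le
    linarith [hMFr]
  have hup2 : HR * fu ≤ A1 * fut + K2 * (K1 * ((S - 2 + ft) * fu + ft * fut)) + A2 * fut := by
    rw [← eH, ← eA1, ← eA2]
    exact le_trans hup (by linarith [hmulbound])
  have hupper : HR ≤ A1 * R + K2 * (K1 * ((S - 2 + ft) + ft * R)) + A2 * R := by
    have hrhs : (A1 * R + K2 * (K1 * ((S - 2 + ft) + ft * R)) + A2 * R) * fu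
        = A1 * (R * fu) + K2 * (K1 * ((S - 2 + ft) * fu + ft * (R * fu))) + A2 * (R * fu) := by
      ring
    rw [← eR] at hrhs
    exact le_of_mul_le_mul_right (by linarith [hup2, hrhs.ge]) hfu
  -- lower bound in divided form
  have hlower : A4 * (1 - (ρ (Ioi t)).toReal) + A3 ≤ HR := by
    have hchain : (A4 * (1 - (ρ (Ioi t)).toReal) + A3) * fu ≤ HR * fu := by
      calc (A4 * (1 - (ρ (Ioi t)).toReal) + A3) * fu
          = (σ (Ioi u)).toReal * (1 - (ρ (Ioi t)).toReal) + (ρ (Ioi u)).toReal := by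
            rw [eA4, eA3]; ring
        _ ≤ ((ρ.conv σ) (Ioi u)).toReal := hlow
        _ = HR * fu := eH
    exact le_of_mul_le_mul_right hchain hfu
  have hpt1 : (ρ (Ioi t)).toReal ≤ 1 := tailR_le_one ρ t
  constructor
  · -- -ε < HR - (c1+c2)
    have hb1 : c2 - δ < A4 := by linarith [hu4.1]
    have hb2 : c1 - δ < A3 := by linarith [hu3.1]
    have hA4ub : A4 ≤ c2 + δ := by linarith [hu4.2]
    have hA4pt : A4 * (ρ (Ioi t)).toReal ≤ (c2 + δ) * δ :=
      mul_le_mul hA4ub htp.le hptnn (by linarith)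
    have hδsq : δ * δ ≤ δ := mul_le_of_le_one_left hδ.le hδ1
    have hδε' := hδε
    rw [hDdef] at hδε'
    have hn1 : 0 ≤ δ * c1 := mul_nonneg hδ.le hc1n
    have hn2 : 0 ≤ δ * (K1 * K2) := mul_nonneg hδ.le (mul_pos hK1 hK2).le
    have hn3 : 0 ≤ δ * c2 := mul_nonneg hδ.le hc2n
    linarith [hlower, hA4pt, hb1, hb2, hδsq, hδε', hn1, hn2, hn3, hε, hδ]
  · -- HR - (c1+c2) < ε
    have hb1 : A1 < c2 + δ := by linarith [hu2.2]
    have hb2 : A2 < c1 + δ := by linarith [hu1.2]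
    have hb3 : R < 1 + δ := by linarith [hu5.2]
    have hb4 : S - 2 < δ := by linarith [hu6.2]
    have hRnn : (0:ℝ) ≤ R := le_trans zero_le_one hR1
    have hδsq : δ * δ ≤ δ := mul_le_of_le_one_left hδ.le hδ1
    have hA1R : A1 * R ≤ (c2 + δ) * (1 + δ) :=
      mul_le_mul hb1.le hb3.le hRnn (by linarith)
    have hA2R : A2 * R ≤ (c1 + δ) * (1 + δ) :=
      mul_le_mul hb2.le hb3.le hRnn (by linarith)
    have hftR : ft * R ≤ δ * (1 + δ) :=
      mul_le_mul hfutδ.le hb3.le hRnn hδ.le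
    have hX : (S - 2 + ft) + ft * R ≤ 4 * δ := by linarith [hb4, hfutδ, hftR, hδsq]
    have hKX : K2 * (K1 * ((S - 2 + ft) + ft * R)) ≤ K2 * (K1 * (4 * δ)) := by
      apply mul_le_mul_of_nonneg_left _ hK2.le
      exact mul_le_mul_of_nonneg_left hX hK1.le
    have hδε' := hδε
    rw [hDdef] at hδε'
    have hn1 : 0 ≤ δ * c1 := mul_nonneg hδ.le hc1n
    have hn2 : 0 ≤ δ * (K1 * K2) := mul_nonneg hδ.le (mul_pos hK1 hK2).le
    have hn3 : 0 ≤ δ * c2 := mul_nonneg hδ.le hc2n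
    linarith [hupper, hA1R, hA2R, hKX, hδε', hδsq, hn1, hn2, hn3, hε, hδ]

/-- The subexponential class is closed under tail-equivalence:
if `1-A(u) ~ a (1-F(u))` with `a > 0` and `F` subexponential, so is `A`. -/
theorem subexponential_tail_equivalence
    (F A : Measure ℝ) [IsProbabilityMeasure F] [IsProbabilityMeasure A]
    (hFsupp : F (Set.Iio 0) = 0) (hAsupp : A (Set.Iio 0) = 0)
    (hFpos : ∀ u : ℝ, F (Set.Ioi u) ≠ 0)
    (a : ℝ) (ha : 0 < a)
    (htail : Tendsto (fun u => (A (Set.Ioi u)).toReal /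
        (a * (F (Set.Ioi u)).toReal)) atTop (nhds 1))
    (hFsub : Subexponential F) :
    Subexponential A := by
  have hfpos : ∀ u : ℝ, 0 < (F (Ioi u)).toReal := tailR_pos F hFpos
  -- A has positive tails
  have hApos : ∀ u : ℝ, (A (Ioi u)).toReal ≠ 0 := by
    by_contra hcon
    push_neg at hcon
    obtain ⟨u0, hu0⟩ := hcon
    have hz : ∀ᶠ u in atTop, (A (Set.Ioi u)).toReal / (a * (F (Set.Ioi u)).toReal) = 0 := by
      filter_upwards [eventually_ge_atTop u0] with u hu
      have : (A (Ioi u)).toReal ≤ (A (Ioi u0)).toReal := tailR_anti A hu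
      have h0 : (A (Ioi u)).toReal = 0 := le_antisymm (by linarith [this, hu0.le]) ENNReal.toReal_nonneg
      rw [h0, zero_div]
    have := tendsto_nhds_unique htail (Tendsto.congr' (hz.mono fun u h => h.symm) tendsto_const_nhds)
    norm_num at this
  -- A tail / F tail → a
  have hAf : Tendsto (fun u => (A (Ioi u)).toReal / (F (Ioi u)).toReal) atTop (nhds a) := by
    have h1 := htail.const_mul a
    rw [mul_one] at h1
    apply h1.congr
    intro u
    rw [← mul_div_assoc, mul_div_mul_left _ _ (ne_of_gt ha)]
  -- F * F property from subexponentiality at n = 2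
  have hF2 : Tendsto (fun u => ((F.conv F) (Ioi u)).toReal / (F (Ioi u)).toReal)
      atTop (nhds 2) := by
    have := hFsub 2 (by norm_num)
    rw [convPow_two] at this
    simpa using this
  -- main induction
  have hAn : ∀ n : ℕ, 1 ≤ n → Tendsto (fun u =>
      ((convPow A n) (Ioi u)).toReal / (F (Ioi u)).toReal) atTop (nhds ((n : ℝ) * a)) := by
    intro n hn
    induction n with
    | zero => omega
    | succ m ih =>
      rcases Nat.eq_or_lt_of_le hn with h1 | h1
      · -- n = 1
        have : m = 0 := by omega
        subst this
        rw [show ((1:ℕ):ℝ) = 1 by norm_num, one_mul]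
        apply hAf.congr
        intro u
        rw [convPow_one]
      · -- m ≥ 1
        have hm : 1 ≤ m := by omega
        have hc := key_conv_tail F (convPow A m) A hFsupp (convPow_Iio_zero A hAsupp m) hAsupp
          hFpos hF2 ((m : ℝ) * a) a (by positivity) ha.le (ih hm) hAf
        have hcast : ((m + 1 : ℕ) : ℝ) * a = (m : ℝ) * a + a := by push_cast; ring
        rw [hcast]
        exact hc
  -- conclude
  intro n hn
  have hdiv := (hAn n hn).div hAf (ne_of_gt ha)
  have hlim : ((n : ℝ) * a) / a = (n : ℝ) := by field_simp
  rw [hlim] at hdiv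
  apply hdiv.congr
  intro u
  simp only [Pi.div_apply]
  rcases eq_or_ne ((A (Ioi u)).toReal) 0 with h | h
  · rw [h, zero_div, div_zero, div_zero]
  · have hf := (hfpos u).ne'
    field_simp
end

section
/- Let X (sum of phase-type claims over [0,t]), H₁, H₂ be independent nonnegative random variables, and let N be an independent Poisson random variable with mean λεt. Define L(x) = P(X + Σ_{i=1}^{N'} Hᵢ > x) where the Hᵢ are i.i.d. copies of H₁ independent of X and N' = N, and define the corrected discard approximation A(x) = e^{-λεt} P(X > x) + (1 - e^{-λεt}) P(X + H₁ > x). Then for all x: P(N ≥ 2)·[P(X + H₁ + H₂ > x) - P(X + H₁ > x)] ≤ L(x) - A(x) ≤ ε²(λt)². In particular L(x) ≥ A(x), so A is a lower bound for the exact aggregate loss tail. -/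
open MeasureTheory Filter Set
open scoped ENNReal

lemma conv_apply_Ioi (μ ν : Measure ℝ) [SFinite μ] [SFinite ν] (x : ℝ) :
    (μ.conv ν) (Set.Ioi x) = ∫⁻ a, ν (Set.Ioi (x - a)) ∂μ := by
  rw [Measure.conv, Measure.map_apply (by fun_prop) measurableSet_Ioi,
      Measure.prod_apply (measurableSet_Ioi.preimage (by fun_prop))]
  congr 1; ext a; congr 1; ext b; simp [sub_lt_iff_lt_add']

lemma my_conv_assoc (μ ν ρ : Measure ℝ) [SFinite μ] [SFinite ν] [SFinite ρ] :
    (μ.conv ν).conv ρ = μ.conv (ν.conv ρ) := by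
  unfold Measure.conv
  conv_lhs => rw [← Measure.map_id (μ := ρ)]
  conv_rhs => rw [← Measure.map_id (μ := μ)]
  rw [Measure.map_prod_map _ _ (by fun_prop) measurable_id,
      Measure.map_prod_map _ _ measurable_id (by fun_prop),
      Measure.map_map (by fun_prop) (by fun_prop),
      Measure.map_map (by fun_prop) (by fun_prop),
      ← (measurePreserving_prodAssoc μ ν ρ).map_eq,
      Measure.map_map (by fun_prop) (by fun_prop)]
  congr 1
  ext p
  simp [MeasurableEquiv.prodAssoc, add_assoc]

lemma convPow_prob_s12 (μ : Measure ℝ) [IsProbabilityMeasure μ] (k : ℕ) :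
    IsProbabilityMeasure (convPow μ k) := by
  induction k with
  | zero => simp only [convPow]; infer_instance
  | succ n ih =>
    simp only [convPow]
    exact Measure.probabilitymeasure_of_probabilitymeasures_conv _ _

/-- Convolving with a nonnegatively supported probability measure increases tails. -/
lemma tail_le_conv_tail (μ ν : Measure ℝ) [IsProbabilityMeasure μ] [IsProbabilityMeasure ν]
    (hν : ν (Set.Iio 0) = 0) (x : ℝ) :
    μ (Set.Ioi x) ≤ (μ.conv ν) (Set.Ioi x) := by
  rw [conv_apply_Ioi]
  have hIci : ν (Set.Ici (0 : ℝ)) = 1 := by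
    rw [← Set.compl_Iio, measure_compl measurableSet_Iio (measure_ne_top _ _), hν]
    simp
  have h1 : μ (Set.Ioi x) = ∫⁻ a, (Set.Ioi x).indicator (fun _ => 1) a ∂μ := by
    rw [lintegral_indicator measurableSet_Ioi]
    simp
  rw [h1]
  refine lintegral_mono fun a => ?_
  by_cases ha : a ∈ Set.Ioi x
  · rw [Set.indicator_of_mem ha]
    calc (1 : ℝ≥0∞) = ν (Set.Ici 0) := hIci.symm
      _ ≤ ν (Set.Ioi (x - a)) := by
          refine measure_mono fun b hb => show x - a < b from lt_of_lt_of_le ?_ hb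
          simp only [Set.mem_Ioi] at ha
          linarith
  · rw [Set.indicator_of_notMem ha]
    exact zero_le

lemma conv_tail_mono_right (μ ρ₁ ρ₂ : Measure ℝ) [SFinite μ] [SFinite ρ₁] [SFinite ρ₂]
    (h : ∀ y, ρ₁ (Set.Ioi y) ≤ ρ₂ (Set.Ioi y)) (x : ℝ) :
    (μ.conv ρ₁) (Set.Ioi x) ≤ (μ.conv ρ₂) (Set.Ioi x) := by
  rw [conv_apply_Ioi, conv_apply_Ioi]
  exact lintegral_mono fun a => h _

/-- Error bounds for the corrected discard approximation of the aggregate loss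
in `[0,t]`: `P(N_H ≥ 2)·[P(X+H₁+H₂ > x) - P(X+H₁ > x)] ≤ L(x) - A(x) ≤ ε²(λt)²`.
Here `L` is the exact aggregate loss tail (conditioning on the Poisson number
`N_H` of heavy-tailed claims, with mean `λεt`) and
`A(x) = e^{-λεt} P(X > x) + (1-e^{-λεt}) P(X+H₁ > x)`. -/
theorem loss_corrected_discard_error_bounds
    (lam t ε : ℝ) (hlam : 0 < lam) (ht : 0 < t) (hε : ε ∈ Set.Ioo (0 : ℝ) 1)
    (μX μH : Measure ℝ) [IsProbabilityMeasure μX] [IsProbabilityMeasure μH]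
    (hXsupp : μX (Set.Iio 0) = 0) (hHsupp : μH (Set.Iio 0) = 0)
    (pois : ℕ → ℝ)
    (hpois : ∀ k : ℕ, pois k =
      Real.exp (-(lam * ε * t)) * (lam * ε * t) ^ k / (k.factorial : ℝ))
    (L A : ℝ → ℝ)
    (hL : ∀ x, L x = ∑' k : ℕ,
      pois k * ((Measure.conv μX (convPow μH k)) (Set.Ioi x)).toReal)
    (hA : ∀ x, A x =
      Real.exp (-(lam * ε * t)) * (μX (Set.Ioi x)).toReal +
        (1 - Real.exp (-(lam * ε * t))) *
          ((Measure.conv μX μH) (Set.Ioi x)).toReal) :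
    ∀ x : ℝ,
      (1 - Real.exp (-(lam * ε * t)) -
          lam * ε * t * Real.exp (-(lam * ε * t))) *
        (((Measure.conv (Measure.conv μX μH) μH) (Set.Ioi x)).toReal -
            ((Measure.conv μX μH) (Set.Ioi x)).toReal)
        ≤ L x - A x ∧
      L x - A x ≤ ε ^ 2 * (lam * t) ^ 2 := by
  intro x
  set p : ℝ := lam * ε * t with hp_def
  have hp : 0 < p := by
    have := hε.1
    positivity
  haveI : ∀ k, IsProbabilityMeasure (convPow μH k) := convPow_prob_s12 μH
  haveI : ∀ k, IsProbabilityMeasure (μX.conv (convPow μH k)) := fun k =>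
    Measure.probabilitymeasure_of_probabilitymeasures_conv _ _
  -- real-valued tails
  set q : ℕ → ℝ := fun k => ((μX.conv (convPow μH k)) (Set.Ioi x)).toReal with hq_def
  have hq0 : ∀ k, 0 ≤ q k := fun k => ENNReal.toReal_nonneg
  have hq1 : ∀ k, q k ≤ 1 := fun k => by
    have := prob_le_one (μ := μX.conv (convPow μH k)) (s := Set.Ioi x)
    simpa [hq_def] using ENNReal.toReal_le_of_le_ofReal zero_le_one (by simpa using this)
  -- monotonicity of q
  have hq_mono : ∀ k, q k ≤ q (k + 1) := by
    intro k
    have h : ∀ y, (convPow μH k) (Set.Ioi y) ≤ (convPow μH (k + 1)) (Set.Ioi y) := by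
      intro y
      simp only [convPow]
      exact tail_le_conv_tail _ _ hHsupp y
    have := conv_tail_mono_right μX _ _ h x
    exact ENNReal.toReal_le_toReal (measure_ne_top _ _) (measure_ne_top _ _) |>.mpr this
  have hq_mono' : ∀ m n, m ≤ n → q m ≤ q n := by
    intro m n hmn
    induction n with
    | zero => simp_all
    | succ n ih =>
      rcases Nat.lt_or_ge m (n + 1) with h | h
      · exact le_trans (ih (Nat.lt_succ_iff.mp h)) (hq_mono n)
      · have : m = n + 1 := le_antisymm hmn h
        simp [this]
  -- identify q 0, q 1, q 2
  have hcp1 : convPow μH 1 = μH := by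
    simp [convPow]
  have hq0' : q 0 = (μX (Set.Ioi x)).toReal := by
    simp [hq_def, convPow]
  have hq1' : q 1 = ((μX.conv μH) (Set.Ioi x)).toReal := by
    simp [hq_def, hcp1]
  have hq2' : q 2 = (((μX.conv μH).conv μH) (Set.Ioi x)).toReal := by
    have : convPow μH 2 = μH.conv μH := by
      simp [convPow, hcp1]
    rw [hq_def]
    simp only [this, my_conv_assoc]
  -- Poisson weights
  have hpois_nonneg : ∀ k, 0 ≤ pois k := by
    intro k
    rw [hpois k]
    positivity
  have hsum_pois : Summable pois := by
    have : Summable (fun k : ℕ => p ^ k / (k.factorial : ℝ)) :=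
      Real.summable_pow_div_factorial p
    refine (this.mul_left (Real.exp (-p))).congr fun k => ?_
    rw [hpois k]; ring
  have htsum_pois : ∑' k, pois k = 1 := by
    have h1 : Real.exp p = ∑' n : ℕ, p ^ n / n.factorial := by
      rw [Real.exp_eq_exp_ℝ, NormedSpace.exp_eq_tsum_div]
    calc ∑' k, pois k = ∑' k, Real.exp (-p) * (p ^ k / k.factorial) := by
          refine tsum_congr fun k => ?_
          rw [hpois k]; ring
      _ = Real.exp (-p) * ∑' k, p ^ k / k.factorial := tsum_mul_left
      _ = Real.exp (-p) * Real.exp p := by rw [h1]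
      _ = 1 := by rw [← Real.exp_add]; simp
  -- summability of the series
  set f : ℕ → ℝ := fun k => pois k * q k with hf_def
  have hf_nonneg : ∀ k, 0 ≤ f k := fun k => mul_nonneg (hpois_nonneg k) (hq0 k)
  have hf_le : ∀ k, f k ≤ pois k := fun k => by
    have := mul_le_mul_of_nonneg_left (hq1 k) (hpois_nonneg k)
    simpa [hf_def] using this
  have hsum_f : Summable f := Summable.of_nonneg_of_le hf_nonneg hf_le hsum_pois
  have hLx : L x = ∑' k, f k := hL x
  -- split off first two terms
  have hsplit_pois : ∑' k, pois k = pois 0 + (pois 1 + ∑' k, pois (k + 2)) := by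
    rw [Summable.tsum_eq_zero_add hsum_pois, Summable.tsum_eq_zero_add (by
      exact (summable_nat_add_iff 1).mpr hsum_pois)]
  have hsum_pois2 : Summable (fun k => pois (k + 2)) := (summable_nat_add_iff 2).mpr hsum_pois
  have hsum_f2 : Summable (fun k => f (k + 2)) := (summable_nat_add_iff 2).mpr hsum_f
  have hsplit_f : ∑' k, f k = f 0 + (f 1 + ∑' k, f (k + 2)) := by
    rw [Summable.tsum_eq_zero_add hsum_f, Summable.tsum_eq_zero_add ((summable_nat_add_iff 1).mpr hsum_f)]
  have hpois0 : pois 0 = Real.exp (-p) := by simp [hpois 0]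
  have hpois1 : pois 1 = p * Real.exp (-p) := by simp [hpois 1]; ring
  have hR : ∑' k, pois (k + 2) = 1 - Real.exp (-p) - p * Real.exp (-p) := by
    have := hsplit_pois
    rw [htsum_pois, hpois0, hpois1] at this
    linarith
  have hAx : A x = pois 0 * q 0 + (pois 1 + ∑' k, pois (k + 2)) * q 1 := by
    have h1e : 1 - Real.exp (-p) = pois 1 + ∑' k, pois (k + 2) := by
      rw [hpois1, hR]; ring
    rw [hA x, ← hq0', ← hq1', h1e, ← hpois0]
  -- the key identity: L x - A x = ∑' k, pois (k+2) * (q (k+2) - q 1)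
  have hkey : L x - A x = ∑' k, pois (k + 2) * (q (k + 2) - q 1) := by
    rw [hLx, hsplit_f, hAx]
    have hfq : ∀ k, pois (k + 2) * (q (k + 2) - q 1) = f (k + 2) - pois (k + 2) * q 1 := by
      intro k; simp only [hf_def]; ring
    rw [tsum_congr hfq, Summable.tsum_sub hsum_f2 (hsum_pois2.mul_right _), tsum_mul_right]
    simp only [hf_def]
    ring
  have hterm_nonneg : ∀ k, 0 ≤ pois (k + 2) * (q (k + 2) - q 1) := fun k =>
    mul_nonneg (hpois_nonneg _) (by have := hq_mono' 1 (k + 2) (by omega); linarith)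
  constructor
  · -- lower bound
    rw [hkey, ← hq2', ← hq1', ← hR, ← tsum_mul_right]
    refine Summable.tsum_le_tsum (fun k => ?_) (hsum_pois2.mul_right _)
      (Summable.of_nonneg_of_le (fun k => hterm_nonneg k)
        (fun k => by
          have := mul_le_mul_of_nonneg_left
            (sub_le_sub_right (hq1 (k + 2)) (q 1)) (hpois_nonneg (k + 2))
          calc pois (k+2) * (q (k+2) - q 1) ≤ pois (k+2) * (1 - q 1) := this
            _ ≤ pois (k+2) * 1 := by
                have := hq0 1
                exact mul_le_mul_of_nonneg_left (by linarith) (hpois_nonneg _)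
            _ = pois (k+2) := mul_one _) hsum_pois2)
    exact mul_le_mul_of_nonneg_left
      (sub_le_sub_right (hq_mono' 2 (k + 2) (by omega)) (q 1)) (hpois_nonneg _)
  · -- upper bound
    have h1 : L x - A x ≤ ∑' k, pois (k + 2) := by
      rw [hkey]
      refine Summable.tsum_le_tsum (fun k => ?_) (Summable.of_nonneg_of_le
        (fun k => hterm_nonneg k) (fun k => ?_) hsum_pois2) hsum_pois2
      · calc pois (k+2) * (q (k+2) - q 1) ≤ pois (k+2) * 1 := by
              refine mul_le_mul_of_nonneg_left ?_ (hpois_nonneg _)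
              have := hq1 (k + 2); have := hq0 1; linarith
          _ = pois (k+2) := mul_one _
      · calc pois (k+2) * (q (k+2) - q 1) ≤ pois (k+2) * 1 := by
              refine mul_le_mul_of_nonneg_left ?_ (hpois_nonneg _)
              have := hq1 (k + 2); have := hq0 1; linarith
          _ = pois (k+2) := mul_one _
    have h2 : ∑' k, pois (k + 2) ≤ p ^ 2 := by
      rw [hR]
      nlinarith [Real.add_one_le_exp (-p), hp.le]
    have h3 : p ^ 2 = ε ^ 2 * (lam * t) ^ 2 := by rw [hp_def]; ring
    linarith
end
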